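/- Let φ : ℝ^m → ℝ be convex and differentiable, A : ℝ^n → ℝ^m be continuously differentiable with L_A-Lipschitz Jacobian, X ⊆ ℝ^n a set on which ‖∇φ(A(x))‖ ≤ M for all x ∈ X, and β > 0. Then for all x, x' ∈ X: β·φ(A(x)) ≥ β·φ(A(x')) + β⟨J_A(x')ᵀ ∇φ(A(x')), x − x'⟩ − (β L_A M/2)‖x − x'‖². -/

import Mathlib

open scoped RealInnerProductSpace

section Aux

variable {E F : Type*} [NormedAddCommGroup E] [InnerProductSpace ℝ E] [CompleteSpace E]
  [NormedAddCommGroup F] [InnerProductSpace ℝ F] [CompleteSpace F]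

lemma convex_grad_ineq (φ : E → ℝ) (gφ : E → E) (hconv : ConvexOn ℝ Set.univ φ)
    (hφgrad : ∀ z, HasGradientAt φ (gφ z) z) (a b : E) :
    φ a + ⟪gφ a, b - a⟫ ≤ φ b := by
  set g : ℝ → ℝ := fun t => φ (a + t • (b - a)) with hg
  have hc : ∀ t : ℝ, HasDerivAt (fun t : ℝ => a + t • (b - a)) (b - a) t := by
    intro t
    simpa using ((hasDerivAt_id t).smul_const (b - a)).const_add a
  have hderiv : HasDerivAt g ⟪gφ a, b - a⟫ 0 := by
    have h1 : HasFDerivAt φ ((InnerProductSpace.toDual ℝ E) (gφ a)) a :=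
      (hφgrad a).hasFDerivAt
    have h1' : HasFDerivAt φ ((InnerProductSpace.toDual ℝ E) (gφ a)) ((fun t : ℝ => a + t • (b - a)) 0) := by
      simpa using h1
    have h2 := h1'.comp_hasDerivAt (0 : ℝ) (hc 0)
    simp only [InnerProductSpace.toDual_apply_apply] at h2
    exact h2
  have hslope : ∀ t : ℝ, 0 < t → t < 1 → slope g 0 t ≤ φ b - φ a := by
    intro t ht ht1
    have hcv := hconv.2 (Set.mem_univ a) (Set.mem_univ b)
      (by linarith : (0:ℝ) ≤ 1 - t) ht.le (by ring)
    have hgt : g t ≤ (1 - t) * φ a + t * φ b := by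
      have : a + t • (b - a) = (1 - t) • a + t • b := by
        simp [smul_sub, sub_smul]; abel
      simpa [hg, this, smul_eq_mul] using hcv
    have hg0 : g 0 = φ a := by simp [hg]
    rw [slope_def_field, sub_zero, div_le_iff₀ ht]
    nlinarith [hgt, hg0]
  have htend : Filter.Tendsto (slope g 0) (nhdsWithin 0 (Set.Ioi 0)) (nhds ⟪gφ a, b - a⟫) :=
    (hasDerivAt_iff_tendsto_slope.mp hderiv).mono_left
      (nhdsWithin_mono _ (fun t ht => ne_of_gt ht))
  have hle : ⟪gφ a, b - a⟫ ≤ φ b - φ a := by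
    refine le_of_tendsto htend ?_
    filter_upwards [Ioo_mem_nhdsGT one_pos] with t ht
    exact hslope t ht.1 ht.2
  linarith

lemma taylor_bound (A : E → F) (J : E → (E →L[ℝ] F)) {LA : ℝ}
    (hderiv : ∀ x, HasFDerivAt A (J x) x) (hJcont : Continuous J)
    (hlip : ∀ x x', ‖J x - J x'‖ ≤ LA * ‖x - x'‖) (x x' : E) :
    ‖A x - A x' - J x' (x - x')‖ ≤ LA / 2 * ‖x - x'‖ ^ 2 := by
  set v := x - x' with hv
  set f : ℝ → F := fun t => A (x' + t • v) - t • (J x' v) with hf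
  set g : ℝ → F := fun t => J (x' + t • v) v - J x' v with hgdef
  have hline : ∀ t : ℝ, HasDerivAt (fun t : ℝ => x' + t • v) v t := by
    intro t; simpa using ((hasDerivAt_id t).smul_const v).const_add x'
  have hfd : ∀ t : ℝ, HasDerivAt f (g t) t := by
    intro t
    have h1 : HasDerivAt (fun t : ℝ => A (x' + t • v)) (J (x' + t • v) v) t :=
      (hderiv (x' + t • v)).comp_hasDerivAt t (hline t)
    have h2 : HasDerivAt (fun t : ℝ => t • (J x' v)) (J x' v) t := by
      simpa using (hasDerivAt_id t).smul_const (J x' v)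
    exact h1.sub h2
  have hgcont : Continuous g := by
    apply Continuous.sub _ continuous_const
    exact (ContinuousLinearMap.apply ℝ F v).continuous.comp
      (hJcont.comp (continuous_const.add (continuous_id.smul continuous_const)))
  have hint : f 1 - f 0 = ∫ t in (0:ℝ)..1, g t := by
    rw [intervalIntegral.integral_eq_sub_of_hasDerivAt (fun t _ => hfd t)
      (hgcont.intervalIntegrable 0 1)]
  have hval : f 1 - f 0 = A x - A x' - J x' v := by
    simp [hf, hv]; abel
  have hbound : ‖∫ t in (0:ℝ)..1, g t‖ ≤ LA / 2 * ‖v‖ ^ 2 := by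
    have h1 : ∀ t ∈ Set.Icc (0:ℝ) 1, ‖g t‖ ≤ (LA * ‖v‖ ^ 2) * t := by
      intro t ht
      have h2 : ‖g t‖ ≤ ‖J (x' + t • v) - J x'‖ * ‖v‖ := by
        simpa [hgdef] using
          ContinuousLinearMap.le_opNorm (J (x' + t • v) - J x') v
      have h3 : ‖J (x' + t • v) - J x'‖ ≤ LA * (t * ‖v‖) := by
        have := hlip (x' + t • v) x'
        simpa [norm_smul, abs_of_nonneg ht.1] using this
      have hvn : (0:ℝ) ≤ ‖v‖ := norm_nonneg v
      nlinarith
    have hib : IntervalIntegrable (fun t => (LA * ‖v‖ ^ 2) * t) MeasureTheory.volume 0 1 :=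
      (continuous_const.mul continuous_id).intervalIntegrable 0 1
    have hae : ∀ᵐ t ∂MeasureTheory.volume.restrict (Set.uIoc (0:ℝ) 1),
        ‖g t‖ ≤ (LA * ‖v‖ ^ 2) * t := by
      filter_upwards [MeasureTheory.ae_restrict_mem measurableSet_uIoc] with t ht
      have ht' : t ∈ Set.Icc (0:ℝ) 1 := by
        rcases Set.mem_uIoc.mp ht with h | h
        · exact ⟨h.1.le, h.2⟩
        · exact ⟨by linarith [h.1, h.2], by linarith [h.1, h.2]⟩
      exact h1 t ht'
    have hnn : (0:ℝ) ≤ LA * ‖v‖ ^ 2 := by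
      have := h1 1 ⟨zero_le_one, le_refl 1⟩
      have := norm_nonneg (g 1)
      linarith
    have hI : ∫ t in (0:ℝ)..1, (LA * ‖v‖ ^ 2) * t = LA / 2 * ‖v‖ ^ 2 := by
      rw [intervalIntegral.integral_const_mul, integral_id]; ring
    calc ‖∫ t in (0:ℝ)..1, g t‖ ≤ |∫ t in (0:ℝ)..1, (LA * ‖v‖ ^ 2) * t| :=
          intervalIntegral.norm_integral_le_abs_of_norm_le hae hib
      _ = LA / 2 * ‖v‖ ^ 2 := by rw [hI, abs_of_nonneg (by linarith)]
  rw [← hval, hint] at *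
  exact hbound

end Aux

/-- Let `φ : ℝ^m → ℝ` be convex and differentiable, `A : ℝ^n → ℝ^m` continuously differentiable
with `L_A`-Lipschitz Jacobian, `X` a set with `‖∇φ(A x)‖ ≤ M` on `X`, and `β > 0`. Then for all
`x, x' ∈ X`:
`β φ(A x) ≥ β φ(A x') + β ⟪J_A(x')ᵀ ∇φ(A x'), x - x'⟫ - (β L_A M / 2)‖x - x'‖²`. -/
theorem stmt_10 (n m : ℕ)
    (φ : EuclideanSpace ℝ (Fin m) → ℝ) (gφ : EuclideanSpace ℝ (Fin m) → EuclideanSpace ℝ (Fin m))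
    (A : EuclideanSpace ℝ (Fin n) → EuclideanSpace ℝ (Fin m))
    (J : EuclideanSpace ℝ (Fin n) → (EuclideanSpace ℝ (Fin n) →L[ℝ] EuclideanSpace ℝ (Fin m)))
    (X : Set (EuclideanSpace ℝ (Fin n))) (LA M β : ℝ) (hβ : 0 < β)
    (hconv : ConvexOn ℝ Set.univ φ)
    (hφgrad : ∀ z, HasGradientAt φ (gφ z) z)
    (hderiv : ∀ x, HasFDerivAt A (J x) x) (hJcont : Continuous J)
    (hlip : ∀ x x', ‖J x - J x'‖ ≤ LA * ‖x - x'‖)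
    (hM : ∀ x ∈ X, ‖gφ (A x)‖ ≤ M) :
    ∀ x ∈ X, ∀ x' ∈ X,
      β * φ (A x) ≥ β * φ (A x') + β * ⟪gφ (A x'), (J x') (x - x')⟫
        - (β * LA * M / 2) * ‖x - x'‖ ^ 2 := by
  intro x hx x' hx'
  have hcg := convex_grad_ineq φ gφ hconv hφgrad (A x') (A x)
  have htb := taylor_bound A J hderiv hJcont hlip x x'
  set R := A x - A x' - J x' (x - x') with hR
  have hsplit : ⟪gφ (A x'), A x - A x'⟫ = ⟪gφ (A x'), (J x') (x - x')⟫ + ⟪gφ (A x'), R⟫ := by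
    rw [← inner_add_right]
    congr 1
    rw [hR]; abel
  have hcs : |⟪gφ (A x'), R⟫| ≤ ‖gφ (A x')‖ * ‖R‖ := abs_real_inner_le_norm _ _
  have hMx' : ‖gφ (A x')‖ ≤ M := hM x' hx'
  have hM0 : (0:ℝ) ≤ M := le_trans (norm_nonneg _) hMx'
  have hRb : ‖gφ (A x')‖ * ‖R‖ ≤ M * (LA / 2 * ‖x - x'‖ ^ 2) := by
    have := mul_le_mul hMx' htb (norm_nonneg _) hM0
    linarith
  have key : φ (A x) ≥ φ (A x') + ⟪gφ (A x'), (J x') (x - x')⟫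
      - (LA * M / 2) * ‖x - x'‖ ^ 2 := by
    have h1 : ⟪gφ (A x'), R⟫ ≥ -(M * (LA / 2 * ‖x - x'‖ ^ 2)) := by
      have := neg_abs_le ⟪gφ (A x'), R⟫
      linarith
    rw [hsplit] at hcg
    nlinarith
  nlinarith
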